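/- Let m, n, d be integers with 2 ≤ m ≤ n ≤ d, let ζ ∈ k be a primitive d-th root of unity, and let t₁, t₂ be natural numbers with t₁ ≤ m − 1 and t₂ ≤ m − 1; assume d + t₁ ≥ m + n. If P ∈ k[x_1,…,x_m,y_1,…,y_n] is homogeneous of total degree d + t₁ − m − n and satisfies ζ^{n−t₂} · σ_ζ(P) = P, then P = 0. -/

import Mathlib

open MvPolynomial

/-- The `k`-algebra endomorphism of `k[x_1,…,x_m,y_1,…,y_n]` fixing the `x` variables and
scaling each `y` variable by `ζ`. -/
noncomputable def sigmaZeta (k : Type*) [Field k] (m n : ℕ) (ζ : k) :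
    MvPolynomial (Fin m ⊕ Fin n) k →ₐ[k] MvPolynomial (Fin m ⊕ Fin n) k :=
  aeval (Sum.elim (fun i => X (Sum.inl i)) (fun j => ζ • X (Sum.inr j)))

lemma sigmaZeta_monomial (k : Type*) [Field k] (m n : ℕ) (ζ : k)
    (ν : (Fin m ⊕ Fin n) →₀ ℕ) (c : k) :
    sigmaZeta k m n ζ (monomial ν c)
      = ζ ^ (∑ j : Fin n, ν (Sum.inr j)) • monomial ν c := by
  induction ν using Finsupp.induction with
  | zero => simp [sigmaZeta]
  | single_add a b f ha hb ih =>
    rw [monomial_single_add, map_mul, map_pow, ih]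
    have hs : ∀ j : Fin n, (Finsupp.single a b + f) (Sum.inr j)
        = Finsupp.single a b (Sum.inr j) + f (Sum.inr j) := fun j => rfl
    cases a with
    | inl i =>
      have hw : (∑ j : Fin n, (Finsupp.single (Sum.inl i : Fin m ⊕ Fin n) b + f) (Sum.inr j))
          = ∑ j : Fin n, f (Sum.inr j) := by
        simp [hs, Finsupp.single_apply]
      rw [hw, sigmaZeta, aeval_X]
      simp only [Sum.elim_inl]
      rw [mul_smul_comm]
    | inr j0 =>
      have hw : (∑ j : Fin n, (Finsupp.single (Sum.inr j0 : Fin m ⊕ Fin n) b + f) (Sum.inr j))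
          = b + ∑ j : Fin n, f (Sum.inr j) := by
        simp [hs, Finsupp.single_apply, Finset.sum_add_distrib, Finset.sum_ite_eq]
      rw [hw, sigmaZeta, aeval_X]
      simp only [Sum.elim_inr]
      rw [smul_pow, smul_mul_smul_comm, ← pow_add]

lemma coeff_sigmaZeta (k : Type*) [Field k] (m n : ℕ) (ζ : k)
    (P : MvPolynomial (Fin m ⊕ Fin n) k) (ν : (Fin m ⊕ Fin n) →₀ ℕ) :
    coeff ν (sigmaZeta k m n ζ P)
      = ζ ^ (∑ j : Fin n, ν (Sum.inr j)) * coeff ν P := by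
  conv_lhs => rw [P.as_sum, map_sum]
  rw [coeff_sum]
  simp_rw [sigmaZeta_monomial, coeff_smul, coeff_monomial, smul_eq_mul, mul_ite, mul_zero]
  rw [Finset.sum_ite_eq' P.support ν]
  by_cases h : ν ∈ P.support
  · simp [h]
  · simp [h, notMem_support_iff.mp h]

/-- For `2 ≤ m ≤ n ≤ d`, `t₁, t₂ ≤ m - 1` and `d + t₁ ≥ m + n`: a homogeneous polynomial of
degree `d + t₁ - m - n` satisfying `ζ^{n-t₂} · σ_ζ(P) = P` is zero.  This is the vanishing
proving the semi-orthogonality of the exceptional collection `A₃`. -/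
theorem semiorthogonality_A3_vanishing (k : Type*) [Field k] (m n d : ℕ)
    (hm : 2 ≤ m) (hmn : m ≤ n) (hnd : n ≤ d)
    (t₁ t₂ : ℕ) (ht₁ : t₁ ≤ m - 1) (ht₂ : t₂ ≤ m - 1) (hd : m + n ≤ d + t₁)
    (ζ : k) (hζ : IsPrimitiveRoot ζ d)
    (P : MvPolynomial (Fin m ⊕ Fin n) k)
    (hhom : P.IsHomogeneous (d + t₁ - m - n))
    (heig : ζ ^ (n - t₂) • sigmaZeta k m n ζ P = P) :
    P = 0 := by
  ext ν
  rw [coeff_zero]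
  by_contra hc
  -- degree of ν
  have hdeg : ν.degree = d + t₁ - m - n := by
    by_contra hdeg
    exact hc (hhom.coeff_eq_zero hdeg)
  set w := ∑ j : Fin n, ν (Sum.inr j) with hw
  have hwle : w ≤ d + t₁ - m - n := by
    rw [← hdeg]
    have h1 : ν.degree = ∑ i : Fin m ⊕ Fin n, ν i := by
      rw [show ν.degree = ∑ i ∈ ν.support, ν i from rfl]
      exact Finset.sum_subset (f := fun i => ν i) (Finset.subset_univ _)
        (fun x _ hx => Finsupp.notMem_support_iff.mp hx)
    rw [h1, Fintype.sum_sum_type]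
    exact le_add_self
  have hcoeff : coeff ν P = ζ ^ (n - t₂ + w) * coeff ν P := by
    conv_lhs => rw [← heig]
    rw [coeff_smul, coeff_sigmaZeta, smul_eq_mul, ← hw, pow_add, mul_assoc]
  have hone : ζ ^ (n - t₂ + w) = 1 :=
    mul_right_cancel₀ hc (by rw [one_mul]; exact hcoeff.symm)
  have hdvd : d ∣ n - t₂ + w := (hζ.pow_eq_one_iff_dvd _).mp hone
  have hpos : 0 < n - t₂ + w := by omega
  have := Nat.le_of_dvd hpos hdvd
  omega
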